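/- Let G_ω be an edge-weighted graph. Then the edge ideal I(G_ω) is integrally closed if and only if G_ω does not contain, as an induced subgraph, any of the following: (i) a path of length 2 whose two edges both have weight at least 2; (ii) two disjoint edges both of weight at least 2; (iii) a 3-cycle all of whose edges have weight at least 2. -/

import Mathlib

open MvPolynomial

/-- The edge ideal of an edge-weighted graph `G` with weight function `w`. -/
noncomputable def edgeIdeal (K : Type*) [Field K] {n : ℕ}
    (G : SimpleGraph (Fin n)) (w : Sym2 (Fin n) → ℕ) :
    Ideal (MvPolynomial (Fin n) K) :=
  Ideal.span {m | ∃ i j : Fin n, G.Adj i j ∧ m = X i ^ w s(i, j) * X j ^ w s(i, j)}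

/-- The integral closure of an ideal `I`. -/
def intClosure {R : Type*} [CommRing R] (I : Ideal R) : Set R :=
  {f | ∃ k : ℕ, 0 < k ∧ ∃ c : ℕ → R,
    (∀ i ∈ Finset.Icc 1 k, c i ∈ I ^ i) ∧
    f ^ k + ∑ i ∈ Finset.Icc 1 k, c i * f ^ (k - i) = 0}

/-- An ideal is integrally closed if it equals its integral closure. -/
def IsIntClosed {R : Type*} [CommRing R] (I : Ideal R) : Prop :=
  intClosure I = ↑I

/-- `G_ω` contains an induced path of length 2 both of whose edges have weight ≥ 2. -/
def HasBadPath3 {n : ℕ} (G : SimpleGraph (Fin n)) (w : Sym2 (Fin n) → ℕ) : Prop :=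
  ∃ a b c : Fin n, a ≠ c ∧ G.Adj a b ∧ G.Adj b c ∧ ¬ G.Adj a c ∧
    2 ≤ w s(a, b) ∧ 2 ≤ w s(b, c)

/-- `G_ω` contains two induced disjoint edges both of weight ≥ 2. -/
def HasBadTwoEdges {n : ℕ} (G : SimpleGraph (Fin n)) (w : Sym2 (Fin n) → ℕ) : Prop :=
  ∃ a b c d : Fin n, a ≠ c ∧ a ≠ d ∧ b ≠ c ∧ b ≠ d ∧
    G.Adj a b ∧ G.Adj c d ∧ ¬ G.Adj a c ∧ ¬ G.Adj a d ∧ ¬ G.Adj b c ∧ ¬ G.Adj b d ∧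
    2 ≤ w s(a, b) ∧ 2 ≤ w s(c, d)

/-- `G_ω` contains a 3-cycle all of whose edges have weight ≥ 2. -/
def HasBadTriangle {n : ℕ} (G : SimpleGraph (Fin n)) (w : Sym2 (Fin n) → ℕ) : Prop :=
  ∃ a b c : Fin n, G.Adj a b ∧ G.Adj b c ∧ G.Adj a c ∧
    2 ≤ w s(a, b) ∧ 2 ≤ w s(b, c) ∧ 2 ≤ w s(a, c)



namespace EdgeIdealAux

variable {K : Type*} [Field K] {n : ℕ}

def genSet {n : ℕ} (G : SimpleGraph (Fin n)) (w : Sym2 (Fin n) → ℕ) : Set (Fin n →₀ ℕ) :=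
  {d | ∃ i j : Fin n, G.Adj i j ∧
    d = Finsupp.single i (w s(i,j)) + Finsupp.single j (w s(i,j))}

lemma edgeIdeal_eq (K : Type*) [Field K] {n : ℕ} (G : SimpleGraph (Fin n))
    (w : Sym2 (Fin n) → ℕ) :
    edgeIdeal K G w = Ideal.span ((fun s => monomial s (1:K)) '' genSet G w) := by
  unfold edgeIdeal
  congr 1
  ext m
  constructor
  · rintro ⟨i, j, hij, rfl⟩
    exact ⟨_, ⟨i, j, hij, rfl⟩,
      by rw [X_pow_eq_monomial, X_pow_eq_monomial, monomial_mul, one_mul]⟩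
  · rintro ⟨d, ⟨i, j, hij, rfl⟩, rfl⟩
    exact ⟨i, j, hij,
      by rw [X_pow_eq_monomial, X_pow_eq_monomial, monomial_mul, one_mul]⟩

lemma mem_edgeIdeal_iff {G : SimpleGraph (Fin n)} {w : Sym2 (Fin n) → ℕ}
    {f : MvPolynomial (Fin n) K} :
    f ∈ edgeIdeal K G w ↔ ∀ u ∈ f.support, ∃ d ∈ genSet G w, d ≤ u := by
  rw [edgeIdeal_eq]; exact mem_ideal_span_monomial_image

lemma gen_le_iff {i j : Fin n} (hij : i ≠ j) (a : ℕ) (u : Fin n →₀ ℕ) :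
    Finsupp.single i a + Finsupp.single j a ≤ u ↔ a ≤ u i ∧ a ≤ u j := by
  rw [Finsupp.le_def]
  constructor
  · intro h
    have hi := h i; have hj := h j
    rw [Finsupp.add_apply, Finsupp.single_eq_same, Finsupp.single_eq_of_ne' hij.symm] at hi
    rw [Finsupp.add_apply, Finsupp.single_eq_of_ne' hij, Finsupp.single_eq_same] at hj
    omega
  · rintro ⟨h1, h2⟩ x
    simp only [Finsupp.add_apply, Finsupp.single_apply]
    by_cases hx : i = x <;> by_cases hx' : j = x <;> subst_eqs <;> simp_all <;> omega

def wt (L : Fin n → ℕ) (u : Fin n →₀ ℕ) : ℕ := ∑ i, u i * L i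

lemma wt_add (L : Fin n → ℕ) (a b : Fin n →₀ ℕ) : wt L (a + b) = wt L a + wt L b := by
  simp [wt, Finsupp.add_apply, add_mul, Finset.sum_add_distrib]

lemma wt_single (L : Fin n → ℕ) (i : Fin n) (a : ℕ) :
    wt L (Finsupp.single i a) = a * L i := by
  simp only [wt, Finsupp.single_apply, ite_mul, zero_mul]
  rw [Finset.sum_ite_eq Finset.univ i (fun x => a * L x)]
  simp

noncomputable def phi (K : Type*) [Field K] {n : ℕ} (L : Fin n → ℕ) :
    MvPolynomial (Fin n) K →ₐ[K] Polynomial (MvPolynomial (Fin n) K) :=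
  aeval (fun i => Polynomial.C (X i) * Polynomial.X ^ L i)

lemma phi_monomial (L : Fin n → ℕ) (u : Fin n →₀ ℕ) (c : K) :
    phi K L (monomial u c) = Polynomial.C (monomial u c) * Polynomial.X ^ wt L u := by
  induction u using Finsupp.induction with
  | zero =>
      simp only [monomial_zero']
      simp [phi, aeval_C, Polynomial.algebraMap_apply, MvPolynomial.algebraMap_eq, wt]
  | single_add i e u' hi he ih =>
      have hm : (monomial (Finsupp.single i e + u') c : MvPolynomial (Fin n) K)
          = X i ^ e * monomial u' c := by
        rw [X_pow_eq_monomial, monomial_mul, one_mul]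
      rw [hm, map_mul, map_pow]
      have hX : phi K L (X i) = Polynomial.C (X i) * Polynomial.X ^ L i := by
        simp [phi]
      rw [hX, ih, mul_pow, ← Polynomial.C_pow, ← pow_mul, wt_add, wt_single,
        Polynomial.C_mul]
      ring

section S2
variable {K : Type*} [Field K] {n : ℕ}
open MvPolynomial EdgeIdealAux

lemma coeff_phi (L : Fin n → ℕ) (p : MvPolynomial (Fin n) K) (m : ℕ) :
    (phi K L p).coeff m
      = ∑ u ∈ p.support.filter (fun u => wt L u = m), monomial u (p.coeff u) := by
  conv_lhs => rw [p.as_sum]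
  rw [map_sum, Polynomial.finset_sum_coeff]
  rw [Finset.sum_filter]
  apply Finset.sum_congr rfl
  intro u _
  rw [phi_monomial, Polynomial.coeff_C_mul, Polynomial.coeff_X_pow]
  by_cases h : wt L u = m
  · simp [h]
  · simp [h, Ne.symm h]

lemma phi_coeff_ne_zero (L : Fin n → ℕ) (p : MvPolynomial (Fin n) K) (u₀ : Fin n →₀ ℕ)
    (h : p.coeff u₀ ≠ 0) : (phi K L p).coeff (wt L u₀) ≠ 0 := by
  intro hz
  have h2 : MvPolynomial.coeff u₀ ((phi K L p).coeff (wt L u₀)) = p.coeff u₀ := by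
    rw [coeff_phi]
    rw [MvPolynomial.coeff_sum]
    have hmem : u₀ ∈ p.support.filter (fun u => wt L u = wt L u₀) :=
      Finset.mem_filter.2 ⟨MvPolynomial.mem_support_iff.2 h, rfl⟩
    rw [Finset.sum_eq_single_of_mem u₀ hmem (fun b _ hb => by
      rw [MvPolynomial.coeff_monomial, if_neg hb])]
    rw [MvPolynomial.coeff_monomial, if_pos rfl]
  rw [hz] at h2
  simp at h2
  exact h h2.symm

lemma phi_below (L : Fin n → ℕ) (p : MvPolynomial (Fin n) K) (m : ℕ)
    (h : ∀ u ∈ p.support, m ≤ wt L u) :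
    ∀ j, j < m → (phi K L p).coeff j = 0 := by
  intro j hj
  rw [coeff_phi]
  apply Finset.sum_eq_zero
  intro u hu
  rw [Finset.mem_filter] at hu
  have := h u hu.1
  omega

/-- all coefficients below `o` vanish -/
def Below {R : Type*} [CommRing R] (P : Polynomial R) (o : ℕ) : Prop :=
  ∀ j, j < o → P.coeff j = 0

lemma below_mul {R : Type*} [CommRing R] {P Q : Polynomial R} {o o' : ℕ}
    (hP : Below P o) (hQ : Below Q o') : Below (P * Q) (o + o') := by
  intro j hj
  rw [Polynomial.coeff_mul]
  apply Finset.sum_eq_zero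
  rintro ⟨x, y⟩ hxy
  rw [Finset.HasAntidiagonal.mem_antidiagonal] at hxy
  rcases lt_or_ge x o with h | h
  · rw [hP x h, zero_mul]
  · rw [hQ y (by omega), mul_zero]

lemma coeff_mul_below {R : Type*} [CommRing R] {P Q : Polynomial R} {o o' : ℕ}
    (hP : Below P o) (hQ : Below Q o') :
    (P * Q).coeff (o + o') = P.coeff o * Q.coeff o' := by
  rw [Polynomial.coeff_mul]
  have hmm : ((o, o') : ℕ × ℕ) ∈ Finset.HasAntidiagonal.antidiagonal (o + o') := Finset.HasAntidiagonal.mem_antidiagonal.2 rfl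
  apply Finset.sum_eq_single_of_mem _ hmm
  rintro ⟨x, y⟩ hxy hne
  rw [Finset.HasAntidiagonal.mem_antidiagonal] at hxy
  rcases lt_or_ge x o with h | h
  · rw [hP x h, zero_mul]
  · rcases lt_or_ge y o' with h' | h'
    · rw [hQ y h', mul_zero]
    · exact absurd (Prod.ext (by omega) (by omega)) hne

lemma below_pow {R : Type*} [CommRing R] {P : Polynomial R} {o : ℕ}
    (hP : Below P o) (k : ℕ) :
    Below (P ^ k) (k * o) ∧ (P ^ k).coeff (k * o) = (P.coeff o) ^ k := by
  induction k with
  | zero => exact ⟨fun j hj => by omega, by simp⟩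
  | succ k ih =>
      have h1 : Below (P ^ (k + 1)) ((k + 1) * o) := by
        rw [pow_succ, Nat.succ_mul]
        exact below_mul ih.1 hP
      refine ⟨h1, ?_⟩
      rw [pow_succ, Nat.succ_mul, coeff_mul_below ih.1 hP, ih.2, pow_succ]

end S2

section S3
variable {K : Type*} [Field K] {n : ℕ}
open MvPolynomial EdgeIdealAux

lemma wt_mul_support {L : Fin n → ℕ} {p q : MvPolynomial (Fin n) K} {s t : ℕ}
    (hp : ∀ u ∈ p.support, s ≤ wt L u) (hq : ∀ u ∈ q.support, t ≤ wt L u) :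
    ∀ u ∈ (p * q).support, s + t ≤ wt L u := by
  intro u hu
  have := MvPolynomial.support_mul p q hu
  rw [Finset.mem_add] at this
  obtain ⟨a, ha, b, hb, rfl⟩ := this
  rw [wt_add]
  exact add_le_add (hp a ha) (hq b hb)

def Jideal (L : Fin n → ℕ) (m : ℕ) : Ideal (MvPolynomial (Fin n) K) where
  carrier := {p | ∀ u ∈ p.support, m ≤ wt L u}
  add_mem' := by
    intro a b ha hb u hu
    have := MvPolynomial.support_add hu
    rw [Finset.mem_union] at this
    rcases this with h | h
    · exact ha u h
    · exact hb u h
  zero_mem' := by intro u hu; simp at hu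
  smul_mem' := by
    intro r p hp u hu
    rw [smul_eq_mul] at hu
    have h0 : ∀ v ∈ r.support, 0 ≤ wt L v := fun _ _ => Nat.zero_le _
    have := wt_mul_support h0 hp u hu
    omega

lemma mem_Jideal {L : Fin n → ℕ} {m : ℕ} {p : MvPolynomial (Fin n) K} :
    p ∈ Jideal (K := K) L m ↔ ∀ u ∈ p.support, m ≤ wt L u := Iff.rfl

lemma Jideal_mul (L : Fin n → ℕ) (s t : ℕ) :
    Jideal (K := K) L s * Jideal (K := K) L t ≤ Jideal (K := K) L (s + t) :=
  Ideal.mul_le.2 fun p hp q hq => wt_mul_support hp hq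

lemma pow_le_Jideal {L : Fin n → ℕ} {I : Ideal (MvPolynomial (Fin n) K)} {d : ℕ}
    (hI : I ≤ Jideal (K := K) L d) (i : ℕ) : I ^ i ≤ Jideal (K := K) L (i * d) := by
  induction i with
  | zero => intro p _ u _; simp
  | succ i ih =>
      rw [pow_succ, Nat.succ_mul]
      calc I ^ i * I ≤ Jideal (K := K) L (i * d) * Jideal (K := K) L d :=
              Ideal.mul_mono ih hI
        _ ≤ Jideal (K := K) L (i * d + d) := Jideal_mul L _ _

lemma key {G : SimpleGraph (Fin n)} {w : Sym2 (Fin n) → ℕ}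
    {f : MvPolynomial (Fin n) K}
    (hmem : f ∈ intClosure (edgeIdeal K G w)) (u₀ : Fin n →₀ ℕ)
    (hu : f.coeff u₀ ≠ 0) (L : Fin n → ℕ)
    (hL : ∀ d ∈ genSet G w, wt L u₀ < wt L d) : False := by
  obtain ⟨k, hk, c, hc, heq⟩ := hmem
  set a := wt L u₀ with ha
  have hIJ : edgeIdeal K G w ≤ Jideal (K := K) L (a + 1) := by
    rw [edgeIdeal_eq, Ideal.span_le]
    rintro m ⟨d, hd, rfl⟩
    intro u hu'
    simp [MvPolynomial.support_monomial] at hu'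
    subst hu'
    exact hL d hd
  have hpow : ∀ i, edgeIdeal K G w ^ i ≤ Jideal (K := K) L (i * (a + 1)) :=
    fun i => pow_le_Jideal hIJ i
  set F := phi K L f with hF
  have hFa : F.coeff a ≠ 0 := phi_coeff_ne_zero L f u₀ hu
  have hFne : F ≠ 0 := fun h => hFa (by rw [h]; simp)
  set m := F.natTrailingDegree with hm
  have hma : m ≤ a := Polynomial.natTrailingDegree_le_of_ne_zero hFa
  have hbelowF : Below F m := fun j hj => Polynomial.coeff_eq_zero_of_lt_natTrailingDegree hj
  have hFm : F.coeff m ≠ 0 := Polynomial.trailingCoeff_nonzero_iff_nonzero.2 hFne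
  have heq2 : F ^ k + ∑ i ∈ Finset.Icc 1 k, (phi K L (c i)) * F ^ (k - i) = 0 := by
    have h := congrArg (phi K L) heq
    simpa only [map_add, map_pow, map_sum, map_mul, map_zero] using h
  have h1 : (F ^ k).coeff (k * m) = (F.coeff m) ^ k := (below_pow hbelowF k).2
  have h2 : ∀ i ∈ Finset.Icc 1 k, ((phi K L (c i)) * F ^ (k - i)).coeff (k * m) = 0 := by
    intro i hi
    rw [Finset.mem_Icc] at hi
    have hbc : Below (phi K L (c i)) (i * (a + 1)) := by
      intro j hj
      exact phi_below L (c i) (i * (a + 1))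
        (fun u hu => mem_Jideal.1 (hpow i (hc i (Finset.mem_Icc.2 hi))) u hu) j hj
    have hbF : Below (F ^ (k - i)) ((k - i) * m) := (below_pow hbelowF (k - i)).1
    apply below_mul hbc hbF
    -- k * m < i * (a + 1) + (k - i) * m
    have e1 : i * m + (k - i) * m = k * m := by rw [← add_mul]; congr 1; omega
    have e2 : i * (m + 1) ≤ i * (a + 1) := Nat.mul_le_mul_left i (by omega)
    have e3 : i * (m + 1) = i * m + i := by rw [Nat.mul_succ]
    omega
  have h3 := congrArg (fun P : Polynomial (MvPolynomial (Fin n) K) => P.coeff (k * m)) heq2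
  simp only [Polynomial.coeff_add, Polynomial.finset_sum_coeff, Polynomial.coeff_zero] at h3
  rw [h1, Finset.sum_eq_zero h2, add_zero] at h3
  exact pow_ne_zero k hFm h3

end S3

section S4
variable {K : Type*} [Field K] {n : ℕ} {G : SimpleGraph (Fin n)} {w : Sym2 (Fin n) → ℕ}
open MvPolynomial EdgeIdealAux

lemma pos_weight (hw : ∀ e ∈ G.edgeSet, 1 ≤ w e) {u : Fin n →₀ ℕ}
    (hNM : ∀ i j : Fin n, G.Adj i j → ¬(w s(i,j) ≤ u i ∧ w s(i,j) ≤ u j))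
    {x y : Fin n} (hxy : G.Adj x y) (hx : u x ≠ 0) (hy : u y ≠ 0) : 2 ≤ w s(x,y) := by
  have h1 := hw _ (G.mem_edgeSet.2 hxy)
  have h2 := hNM x y hxy
  omega

lemma share (hP : ¬HasBadPath3 G w) (hT : ¬HasBadTriangle G w)
    (hw : ∀ e ∈ G.edgeSet, 1 ≤ w e) {u : Fin n →₀ ℕ}
    (hNM : ∀ i j : Fin n, G.Adj i j → ¬(w s(i,j) ≤ u i ∧ w s(i,j) ≤ u j))
    {x y z : Fin n} (hxy : G.Adj x y) (hxz : G.Adj x z) (hyz : y ≠ z)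
    (hux : u x ≠ 0) (huy : u y ≠ 0) (huz : u z ≠ 0) : False := by
  have h1 : 2 ≤ w s(x,y) := pos_weight hw hNM hxy hux huy
  have h2 : 2 ≤ w s(x,z) := pos_weight hw hNM hxz hux huz
  have h1' : 2 ≤ w s(y,x) := by rwa [Sym2.eq_swap]
  by_cases hadj : G.Adj y z
  · have h3 : 2 ≤ w s(y,z) := pos_weight hw hNM hadj huy huz
    exact hT ⟨y, x, z, hxy.symm, hxz, hadj, h1', h2, h3⟩
  · exact hP ⟨y, x, z, hyz, hxy.symm, hxz, hadj, h1', h2⟩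

lemma uniq (hP : ¬HasBadPath3 G w) (hT2 : ¬HasBadTwoEdges G w) (hT : ¬HasBadTriangle G w)
    (hw : ∀ e ∈ G.edgeSet, 1 ≤ w e) {u : Fin n →₀ ℕ}
    (hNM : ∀ i j : Fin n, G.Adj i j → ¬(w s(i,j) ≤ u i ∧ w s(i,j) ≤ u j))
    {p q i j : Fin n} (hpq : G.Adj p q) (hij : G.Adj i j)
    (hup : u p ≠ 0) (huq : u q ≠ 0) (hui : u i ≠ 0) (huj : u j ≠ 0) :
    (i = p ∧ j = q) ∨ (i = q ∧ j = p) := by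
  by_cases h1 : i = p
  · subst h1
    by_cases h2 : j = q
    · exact Or.inl ⟨rfl, h2⟩
    · exact absurd (share hP hT hw hNM hpq hij (fun h => h2 h.symm) hup huq huj) id
  by_cases h2 : i = q
  · subst h2
    by_cases h3 : j = p
    · exact Or.inr ⟨rfl, h3⟩
    · exact absurd (share hP hT hw hNM hpq.symm hij (fun h => h3 h.symm) huq hup huj) id
  by_cases h3 : j = p
  · subst h3
    exact absurd (share hP hT hw hNM hpq hij.symm (fun h => h2 h.symm) hup huq hui) id
  by_cases h4 : j = q
  · subst h4
    exact absurd (share hP hT hw hNM hpq.symm hij.symm (fun h => h1 h.symm) huq hup hui) id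
  exfalso
  by_cases c1 : G.Adj p i
  · exact share hP hT hw hNM hpq c1 (fun h => h2 h.symm) hup huq hui
  by_cases c2 : G.Adj p j
  · exact share hP hT hw hNM hpq c2 (fun h => h4 h.symm) hup huq huj
  by_cases c3 : G.Adj q i
  · exact share hP hT hw hNM hpq.symm c3 (fun h => h1 h.symm) huq hup hui
  by_cases c4 : G.Adj q j
  · exact share hP hT hw hNM hpq.symm c4 (fun h => h3 h.symm) huq hup huj
  exact hT2 ⟨p, q, i, j, fun h => h1 h.symm, fun h => h3 h.symm, fun h => h2 h.symm,
    fun h => h4 h.symm, hpq, hij, c1, c2, c3, c4,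
    pos_weight hw hNM hpq hup huq, pos_weight hw hNM hij hui huj⟩

lemma hard_case2 (hP : ¬HasBadPath3 G w) (hT2 : ¬HasBadTwoEdges G w)
    (hT : ¬HasBadTriangle G w) (hw : ∀ e ∈ G.edgeSet, 1 ≤ w e)
    {f : MvPolynomial (Fin n) K} (hmem : f ∈ intClosure (edgeIdeal K G w))
    {u : Fin n →₀ ℕ} (hcoeff : f.coeff u ≠ 0)
    (hNM : ∀ i j : Fin n, G.Adj i j → ¬(w s(i,j) ≤ u i ∧ w s(i,j) ≤ u j))
    {p q : Fin n} (hpq : G.Adj p q) (hp : u p ≠ 0) (hq : u q ≠ 0) (hle : u p ≤ u q) :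
    False := by
  set W := w s(p,q) with hW
  have hW2 : 2 ≤ W := pos_weight hw hNM hpq hp hq
  have hupW : u p < W := by have := hNM p q hpq; omega
  set L : Fin n → ℕ := fun i => if u i = 0 then W else if i = p then 1 else 0 with hLdef
  have hLp : L p = 1 := by simp [hLdef, hp]
  have hwtu : wt L u = u p := by
    rw [wt]
    rw [Finset.sum_eq_single_of_mem p (Finset.mem_univ p)]
    · rw [hLp, mul_one]
    · intro x _ hx
      by_cases hux : u x = 0
      · rw [hux, zero_mul]
      · have : L x = 0 := by simp [hLdef, hux, hx]
        rw [this, mul_zero]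
  apply key hmem u hcoeff L
  rintro d ⟨i, j, hij, rfl⟩
  rw [hwtu, wt_add, wt_single, wt_single, ← Nat.mul_add]
  have hw_ij : 1 ≤ w s(i,j) := hw _ (G.mem_edgeSet.2 hij)
  by_cases hi : u i = 0
  · have hLi : L i = W := by simp [hLdef, hi]
    have : W ≤ w s(i,j) * (L i + L j) := by
      calc W = 1 * W := (one_mul W).symm
        _ ≤ w s(i,j) * (L i + L j) := Nat.mul_le_mul hw_ij (by omega)
    omega
  by_cases hj : u j = 0
  · have hLj : L j = W := by simp [hLdef, hj]
    have : W ≤ w s(i,j) * (L i + L j) := by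
      calc W = 1 * W := (one_mul W).symm
        _ ≤ w s(i,j) * (L i + L j) := Nat.mul_le_mul hw_ij (by omega)
    omega
  rcases uniq hP hT2 hT hw hNM hpq hij hp hq hi hj with ⟨rfl, rfl⟩ | ⟨rfl, rfl⟩
  · rw [hLp]
    have : W ≤ w s(i,j) * (1 + L j) := by
      calc W = W * 1 := (mul_one W).symm
        _ ≤ w s(i,j) * (1 + L j) := Nat.mul_le_mul (le_of_eq hW) (by omega)
    omega
  · have hsw : w s(i,j) = W := by rw [hW, Sym2.eq_swap]
    rw [hLp, hsw]
    have : W ≤ W * (L i + 1) := by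
      calc W = W * 1 := (mul_one W).symm
        _ ≤ W * (L i + 1) := Nat.mul_le_mul_left W (by omega)
    omega

lemma hard_direction (hP : ¬HasBadPath3 G w) (hT2 : ¬HasBadTwoEdges G w)
    (hT : ¬HasBadTriangle G w) (hw : ∀ e ∈ G.edgeSet, 1 ≤ w e)
    {f : MvPolynomial (Fin n) K} (hmem : f ∈ intClosure (edgeIdeal K G w)) :
    f ∈ edgeIdeal K G w := by
  rw [mem_edgeIdeal_iff]
  intro u hu
  by_contra hnot
  push_neg at hnot
  have hNM : ∀ i j : Fin n, G.Adj i j → ¬(w s(i,j) ≤ u i ∧ w s(i,j) ≤ u j) := by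
    intro i j hij h
    exact hnot _ ⟨i, j, hij, rfl⟩ ((gen_le_iff hij.ne _ u).2 h)
  have hcoeff : f.coeff u ≠ 0 := MvPolynomial.mem_support_iff.1 hu
  by_cases hcase : ∃ p q : Fin n, G.Adj p q ∧ u p ≠ 0 ∧ u q ≠ 0
  · obtain ⟨p, q, hpq, hp, hq⟩ := hcase
    rcases le_total (u p) (u q) with hle | hle
    · exact hard_case2 hP hT2 hT hw hmem hcoeff hNM hpq hp hq hle
    · exact hard_case2 hP hT2 hT hw hmem hcoeff hNM hpq.symm hq hp hle
  · push_neg at hcase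
    set L : Fin n → ℕ := fun i => if u i = 0 then 1 else 0 with hLdef
    apply key hmem u hcoeff L
    rintro d ⟨i, j, hij, rfl⟩
    have hwtu : wt L u = 0 := by
      rw [wt]
      apply Finset.sum_eq_zero
      intro x _
      by_cases hux : u x = 0
      · rw [hux, zero_mul]
      · have : L x = 0 := by simp [hLdef, hux]
        rw [this, mul_zero]
    rw [hwtu, wt_add, wt_single, wt_single, ← Nat.mul_add]
    have hw_ij : 1 ≤ w s(i,j) := hw _ (G.mem_edgeSet.2 hij)
    have hLij : 1 ≤ L i + L j := by
      by_cases hui : u i = 0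
      · have : L i = 1 := by simp [hLdef, hui]
        omega
      · have huj : u j = 0 := hcase i j hij hui
        have : L j = 1 := by simp [hLdef, huj]
        omega
    have := Nat.mul_le_mul hw_ij hLij
    omega

end S4
section S5
variable {K : Type*} [Field K] {n : ℕ} {G : SimpleGraph (Fin n)} {w : Sym2 (Fin n) → ℕ}
open MvPolynomial EdgeIdealAux

lemma counter_path (K : Type*) [Field K] (hcl : IsIntClosed (edgeIdeal K G w))
    (hw : ∀ e ∈ G.edgeSet, 1 ≤ w e) {a b c : Fin n}
    (hab : G.Adj a b) (hbc : G.Adj b c) (hac : a ≠ c)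
    (h1 : 2 ≤ w s(a,b)) (h2 : 2 ≤ w s(b,c))
    (hAC : G.Adj a c → (w s(a,b) ≤ w s(a,c) ∨ w s(b,c) ≤ w s(a,c))) : False := by
  set v1 := w s(a,b) with hv1
  set v2 := w s(b,c) with hv2
  have hab' : a ≠ b := hab.ne
  have hbc' : b ≠ c := hbc.ne
  have hba : b ≠ a := hab'.symm
  have hcb : c ≠ b := hbc'.symm
  have hca : c ≠ a := hac.symm
  set v : Fin n →₀ ℕ :=
    Finsupp.single a (v1-1) + Finsupp.single b (v1+v2-1) + Finsupp.single c (v2-1) with hv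
  set rv : Fin n →₀ ℕ :=
    Finsupp.single a (v1-2) + Finsupp.single b (v1+v2-2) + Finsupp.single c (v2-2) with hrv
  set f : MvPolynomial (Fin n) K := monomial v 1 with hfdef
  have g1mem : (X a ^ v1 * X b ^ v1 : MvPolynomial (Fin n) K) ∈ edgeIdeal K G w :=
    Ideal.subset_span ⟨a, b, hab, rfl⟩
  have g2mem : (X b ^ v2 * X c ^ v2 : MvPolynomial (Fin n) K) ∈ edgeIdeal K G w :=
    Ideal.subset_span ⟨b, c, hbc, rfl⟩
  have hexp : v + v = (Finsupp.single a v1 + Finsupp.single b v1)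
      + (Finsupp.single b v2 + Finsupp.single c v2) + rv := by
    ext x
    simp only [hv, hrv, Finsupp.add_apply, Finsupp.single_apply]
    by_cases hxa : a = x <;> by_cases hxb : b = x <;> by_cases hxc : c = x <;>
      simp_all <;> omega
  have hf2 : f * f = ((X a ^ v1 * X b ^ v1) * (X b ^ v2 * X c ^ v2)) * monomial rv 1 := by
    simp only [hfdef, X_pow_eq_monomial, monomial_mul, one_mul, mul_one]
    rw [hexp]
  have hfcl : f ∈ intClosure (edgeIdeal K G w) := by
    refine ⟨2, by norm_num, fun i => if i = 2 then -(f * f) else 0, ?_, ?_⟩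
    · intro i hi
      rw [Finset.mem_Icc] at hi
      by_cases h : i = 2
      · subst h
        simp only [if_pos rfl]
        apply neg_mem
        rw [hf2, pow_two]
        exact Ideal.mul_mem_right _ _ (Ideal.mul_mem_mul g1mem g2mem)
      · simp only [if_neg h]
        exact zero_mem _
    · have hicc : Finset.Icc 1 2 = ({1, 2} : Finset ℕ) := by decide
      rw [hicc, Finset.sum_insert (by decide), Finset.sum_singleton]
      norm_num
      rw [pow_two]
      ring
  have hfI : f ∈ edgeIdeal K G w := by
    have : f ∈ (edgeIdeal K G w : Set (MvPolynomial (Fin n) K)) := hcl ▸ hfcl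
    exact this
  rw [mem_edgeIdeal_iff] at hfI
  have hsupp : v ∈ f.support := by
    rw [hfdef]
    simp [MvPolynomial.support_monomial]
  obtain ⟨dd, ⟨i, j, hij, rfl⟩, hdle⟩ := hfI v hsupp
  rw [gen_le_iff hij.ne] at hdle
  obtain ⟨hdi, hdj⟩ := hdle
  have hWij : 1 ≤ w s(i,j) := hw _ (G.mem_edgeSet.2 hij)
  have hva : v a = v1 - 1 := by
    simp [hv, Finsupp.single_apply, hba, hca]
  have hvb : v b = v1 + v2 - 1 := by
    simp [hv, Finsupp.single_apply, hab', hcb]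
  have hvc : v c = v2 - 1 := by
    simp [hv, Finsupp.single_apply, hac, hbc']
  have hzero : ∀ x, x ≠ a → x ≠ b → x ≠ c → v x = 0 := by
    intro x h1' h2' h3'
    simp [hv, Finsupp.single_apply, h1'.symm, h2'.symm, h3'.symm]
  have hia : i = a ∨ i = b ∨ i = c := by
    by_contra h
    push_neg at h
    rw [hzero i h.1 h.2.1 h.2.2] at hdi
    omega
  have hja : j = a ∨ j = b ∨ j = c := by
    by_contra h
    push_neg at h
    rw [hzero j h.1 h.2.1 h.2.2] at hdj
    omega
  have hwba : w s(b,a) = v1 := by rw [hv1, Sym2.eq_swap]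
  have hwcb : w s(c,b) = v2 := by rw [hv2, Sym2.eq_swap]
  rcases hia with hi' | hi' | hi' <;> rcases hja with hj' | hj' | hj' <;>
    rw [hi', hj'] at hij hdi hdj
  · exact hij.ne rfl
  · rw [hva] at hdi; rw [← hv1] at hdi; omega
  · rcases hAC hij with h | h
    · rw [hva] at hdi; omega
    · rw [hvc] at hdj; omega
  · rw [hva] at hdj; rw [hwba] at hdj; omega
  · exact hij.ne rfl
  · rw [hvc] at hdj; rw [← hv2] at hdj; omega
  · rcases hAC hij.symm with h | h
    · rw [hva] at hdj
      have : w s(c,a) = w s(a,c) := by rw [Sym2.eq_swap]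
      omega
    · rw [hvc] at hdi
      have : w s(c,a) = w s(a,c) := by rw [Sym2.eq_swap]
      omega
  · rw [hvc] at hdi; rw [hwcb] at hdi; omega
  · exact hij.ne rfl

end S5
section S6
variable {K : Type*} [Field K] {n : ℕ} {G : SimpleGraph (Fin n)} {w : Sym2 (Fin n) → ℕ}
open MvPolynomial EdgeIdealAux

lemma counter_two (K : Type*) [Field K] (hcl : IsIntClosed (edgeIdeal K G w))
    (hw : ∀ e ∈ G.edgeSet, 1 ≤ w e) {a b c d : Fin n}
    (hac : a ≠ c) (had : a ≠ d) (hbc : b ≠ c) (hbd : b ≠ d)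
    (hab : G.Adj a b) (hcd : G.Adj c d)
    (hnac : ¬G.Adj a c) (hnad : ¬G.Adj a d) (hnbc : ¬G.Adj b c) (hnbd : ¬G.Adj b d)
    (h1 : 2 ≤ w s(a,b)) (h2 : 2 ≤ w s(c,d)) : False := by
  set v1 := w s(a,b) with hv1
  set v2 := w s(c,d) with hv2
  have hab' : a ≠ b := hab.ne
  have hcd' : c ≠ d := hcd.ne
  have hba : b ≠ a := hab'.symm
  have hdc : d ≠ c := hcd'.symm
  have hca : c ≠ a := hac.symm
  have hda : d ≠ a := had.symm
  have hcb : c ≠ b := hbc.symm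
  have hdb : d ≠ b := hbd.symm
  set v : Fin n →₀ ℕ := Finsupp.single a (v1-1) + Finsupp.single b (v1-1)
    + Finsupp.single c (v2-1) + Finsupp.single d (v2-1) with hv
  set rv : Fin n →₀ ℕ := Finsupp.single a (v1-2) + Finsupp.single b (v1-2)
    + Finsupp.single c (v2-2) + Finsupp.single d (v2-2) with hrv
  set f : MvPolynomial (Fin n) K := monomial v 1 with hfdef
  have g1mem : (X a ^ v1 * X b ^ v1 : MvPolynomial (Fin n) K) ∈ edgeIdeal K G w :=
    Ideal.subset_span ⟨a, b, hab, rfl⟩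
  have g2mem : (X c ^ v2 * X d ^ v2 : MvPolynomial (Fin n) K) ∈ edgeIdeal K G w :=
    Ideal.subset_span ⟨c, d, hcd, rfl⟩
  have hexp : v + v = (Finsupp.single a v1 + Finsupp.single b v1)
      + (Finsupp.single c v2 + Finsupp.single d v2) + rv := by
    ext x
    simp only [hv, hrv, Finsupp.add_apply, Finsupp.single_apply]
    by_cases hxa : a = x <;> by_cases hxb : b = x <;> by_cases hxc : c = x <;>
      by_cases hxd : d = x <;> simp_all <;> omega
  have hf2 : f * f = ((X a ^ v1 * X b ^ v1) * (X c ^ v2 * X d ^ v2)) * monomial rv 1 := by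
    simp only [hfdef, X_pow_eq_monomial, monomial_mul, one_mul, mul_one]
    rw [hexp]
  have hfcl : f ∈ intClosure (edgeIdeal K G w) := by
    refine ⟨2, by norm_num, fun i => if i = 2 then -(f * f) else 0, ?_, ?_⟩
    · intro i hi
      rw [Finset.mem_Icc] at hi
      by_cases h : i = 2
      · subst h
        simp only [if_pos rfl]
        apply neg_mem
        rw [hf2, pow_two]
        exact Ideal.mul_mem_right _ _ (Ideal.mul_mem_mul g1mem g2mem)
      · simp only [if_neg h]
        exact zero_mem _
    · have hicc : Finset.Icc 1 2 = ({1, 2} : Finset ℕ) := by decide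
      rw [hicc, Finset.sum_insert (by decide), Finset.sum_singleton]
      norm_num
      rw [pow_two]
      ring
  have hfI : f ∈ edgeIdeal K G w := by
    have : f ∈ (edgeIdeal K G w : Set (MvPolynomial (Fin n) K)) := hcl ▸ hfcl
    exact this
  rw [mem_edgeIdeal_iff] at hfI
  have hsupp : v ∈ f.support := by
    rw [hfdef]
    simp [MvPolynomial.support_monomial]
  obtain ⟨dd, ⟨i, j, hij, rfl⟩, hdle⟩ := hfI v hsupp
  rw [gen_le_iff hij.ne] at hdle
  obtain ⟨hdi, hdj⟩ := hdle
  have hWij : 1 ≤ w s(i,j) := hw _ (G.mem_edgeSet.2 hij)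
  have hva : v a = v1 - 1 := by
    simp [hv, Finsupp.single_apply, hba, hca, hda]
  have hvb : v b = v1 - 1 := by
    simp [hv, Finsupp.single_apply, hab', hcb, hdb]
  have hvc : v c = v2 - 1 := by
    simp [hv, Finsupp.single_apply, hac, hbc, hdc]
  have hvd : v d = v2 - 1 := by
    simp [hv, Finsupp.single_apply, had, hbd, hcd']
  have hzero : ∀ x, x ≠ a → x ≠ b → x ≠ c → x ≠ d → v x = 0 := by
    intro x h1' h2' h3' h4'
    simp [hv, Finsupp.single_apply, h1'.symm, h2'.symm, h3'.symm, h4'.symm]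
  have hia : i = a ∨ i = b ∨ i = c ∨ i = d := by
    by_contra h
    push_neg at h
    rw [hzero i h.1 h.2.1 h.2.2.1 h.2.2.2] at hdi
    omega
  have hja : j = a ∨ j = b ∨ j = c ∨ j = d := by
    by_contra h
    push_neg at h
    rw [hzero j h.1 h.2.1 h.2.2.1 h.2.2.2] at hdj
    omega
  have hwba : w s(b,a) = v1 := by rw [hv1, Sym2.eq_swap]
  have hwdc : w s(d,c) = v2 := by rw [hv2, Sym2.eq_swap]
  rcases hia with hi' | hi' | hi' | hi' <;> rcases hja with hj' | hj' | hj' | hj' <;>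
    rw [hi', hj'] at hij hdi hdj
  · exact hij.ne rfl
  · rw [hva] at hdi; rw [← hv1] at hdi; omega
  · exact hnac hij
  · exact hnad hij
  · rw [hvb] at hdi; rw [hwba] at hdi; omega
  · exact hij.ne rfl
  · exact hnbc hij
  · exact hnbd hij
  · exact hnac hij.symm
  · exact hnbc hij.symm
  · exact hij.ne rfl
  · rw [hvc] at hdi; rw [← hv2] at hdi; omega
  · exact hnad hij.symm
  · exact hnbd hij.symm
  · rw [hvd] at hdi; rw [hwdc] at hdi; omega
  · exact hij.ne rfl

end S6

end EdgeIdealAux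

open EdgeIdealAux

/-- `I(G_ω)` is integrally closed if and only if `G_ω` contains none of the following as
an induced subgraph: a path of length 2 with both edges of weight ≥ 2, two disjoint
edges of weight ≥ 2, or a 3-cycle with all edges of weight ≥ 2. -/
theorem edgeIdeal_intClosed_iff
    (K : Type*) [Field K] {n : ℕ} (G : SimpleGraph (Fin n))
    (w : Sym2 (Fin n) → ℕ) (hw : ∀ e ∈ G.edgeSet, 1 ≤ w e) :
    IsIntClosed (edgeIdeal K G w) ↔
      ¬ (HasBadPath3 G w ∨ HasBadTwoEdges G w ∨ HasBadTriangle G w) := by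
  constructor
  · intro hcl
    rintro (⟨a, b, c, hac, hab, hbc, hnadj, h1, h2⟩ |
      ⟨a, b, c, d, hac, had, hbc, hbd, hab, hcd, hnac, hnad, hnbc, hnbd, h1, h2⟩ |
      ⟨a, b, c, hab, hbc, hacadj, h1, h2, h3⟩)
    · exact counter_path K hcl hw hab hbc hac h1 h2 (fun h => absurd h hnadj)
    · exact counter_two K hcl hw hac had hbc hbd hab hcd hnac hnad hnbc hnbd h1 h2
    · by_cases hc : w s(a,b) ≤ w s(a,c) ∨ w s(b,c) ≤ w s(a,c)
      · exact counter_path K hcl hw hab hbc hacadj.ne h1 h2 (fun _ => hc)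
      · push_neg at hc
        refine counter_path K hcl hw hacadj hbc.symm hab.ne h3 ?_ (fun _ => Or.inl hc.1.le)
        rw [Sym2.eq_swap]
        exact h2
  · intro hnb
    have hP : ¬HasBadPath3 G w := fun h => hnb (Or.inl h)
    have hT2 : ¬HasBadTwoEdges G w := fun h => hnb (Or.inr (Or.inl h))
    have hT : ¬HasBadTriangle G w := fun h => hnb (Or.inr (Or.inr h))
    show intClosure (edgeIdeal K G w) = ↑(edgeIdeal K G w)
    apply Set.Subset.antisymm
    · intro f hf
      exact hard_direction hP hT2 hT hw hf
    · intro f hf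
      refine ⟨1, one_pos, fun _ => -f, ?_, ?_⟩
      · intro i hi
        rw [Finset.mem_Icc] at hi
        have : i = 1 := by omega
        subst this
        rw [pow_one]
        exact neg_mem hf
      · rw [Finset.Icc_self, Finset.sum_singleton]
        simp
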